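/- Let z be the complex number z = 1/2 - (i/2)·√(8√5 - 5), where √(8√5 - 5) denotes the positive real square root. Then z⁴ - 2z³ - z² + 2z - 19 = 0, and the polynomial x⁴ - 2x³ - x² + 2x - 19 is irreducible over ℚ. -/

import Mathlib

open Polynomial

/-- A monic polynomial of degree 2 is determined by its lower coefficients. -/
lemma monic2_aux {F : Type*} [Field F] {p : F[X]} (hp : p.Monic) (h2 : p.natDegree = 2) :
    p = X ^ 2 + C (p.coeff 1) * X + C (p.coeff 0) := by
  have hd : (p - X ^ 2).degree ≤ 1 := by
    have h1 : (p - X ^ 2).natDegree ≤ 1 := by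
      apply Polynomial.natDegree_le_iff_coeff_eq_zero.mpr
      intro n hn
      have hn' : 2 ≤ n := hn
      rcases eq_or_lt_of_le hn' with h | h
      · rw [Polynomial.coeff_sub, Polynomial.coeff_X_pow, if_pos h.symm, ← h]
        have := hp.coeff_natDegree
        rw [h2] at this
        rw [this]; ring
      · rw [Polynomial.coeff_sub, Polynomial.coeff_X_pow, if_neg (by omega)]
        rw [Polynomial.coeff_eq_zero_of_natDegree_lt (by omega)]; ring
    exact le_trans Polynomial.degree_le_natDegree (by exact_mod_cast h1)
  have hx := Polynomial.eq_X_add_C_of_degree_le_one hd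
  have hc1 : (p - X ^ 2).coeff 1 = p.coeff 1 := by simp [Polynomial.coeff_X_pow]
  have hc0 : (p - X ^ 2).coeff 0 = p.coeff 0 := by simp [Polynomial.coeff_X_pow]
  rw [hc1, hc0] at hx
  linear_combination (norm := ring_nf) hx

/-- A degree-one polynomial over a field has a root. -/
lemma root_of_deg1_aux {F : Type*} [Field F] {p : F[X]} (h1 : p.natDegree = 1) :
    ∃ x : F, p.eval x = 0 := by
  have hp := Polynomial.eq_X_add_C_of_natDegree_le_one (le_of_eq h1)
  have hc : p.coeff 1 ≠ 0 := by
    intro h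
    rw [h] at hp
    simp at hp
    rw [hp] at h1
    simp [Polynomial.natDegree_C] at h1
  refine ⟨-p.coeff 0 / p.coeff 1, ?_⟩
  nth_rewrite 3 [hp]
  simp only [eval_add, eval_mul, eval_C, eval_X]
  field_simp
  ring

/-- Irreducibility criterion for a monic quartic over a field: no roots, and
no factorization into two monic quadratics. -/
lemma irred4_aux {F : Type*} [Field F] {f : F[X]} (hm : f.Monic) (hdeg : f.natDegree = 4)
    (h1 : ∀ x : F, f.eval x ≠ 0)
    (h2 : ∀ a b c d : F, f ≠ (X ^ 2 + C a * X + C b) * (X ^ 2 + C c * X + C d)) :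
    Irreducible f := by
  have hf0 : f ≠ 0 := hm.ne_zero
  constructor
  · intro hu
    have := Polynomial.natDegree_eq_zero_of_isUnit hu; omega
  · intro g h hgh
    by_contra hcon
    push_neg at hcon
    obtain ⟨hg, hh⟩ := hcon
    have hg0 : g ≠ 0 := by rintro rfl; rw [zero_mul] at hgh; exact hf0 hgh
    have hh0 : h ≠ 0 := by rintro rfl; rw [mul_zero] at hgh; exact hf0 hgh
    have hgd : g.natDegree ≠ 0 := by
      intro hd
      exact hg ((Polynomial.eq_C_of_natDegree_eq_zero hd) ▸ Polynomial.isUnit_C.mpr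
        (isUnit_iff_ne_zero.mpr (fun hc => hg0
          (by rw [Polynomial.eq_C_of_natDegree_eq_zero hd, hc, map_zero]))))
    have hhd : h.natDegree ≠ 0 := by
      intro hd
      exact hh ((Polynomial.eq_C_of_natDegree_eq_zero hd) ▸ Polynomial.isUnit_C.mpr
        (isUnit_iff_ne_zero.mpr (fun hc => hh0
          (by rw [Polynomial.eq_C_of_natDegree_eq_zero hd, hc, map_zero]))))
    have hsum : g.natDegree + h.natDegree = 4 := by
      rw [← Polynomial.natDegree_mul hg0 hh0, ← hgh, hdeg]
    rcases eq_or_ne g.natDegree 1 with hd1 | hd1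
    · obtain ⟨x, hx⟩ := root_of_deg1_aux hd1
      exact h1 x (by rw [hgh, Polynomial.eval_mul, hx, zero_mul])
    rcases eq_or_ne h.natDegree 1 with hd2 | hd2
    · obtain ⟨x, hx⟩ := root_of_deg1_aux hd2
      exact h1 x (by rw [hgh, Polynomial.eval_mul, hx, mul_zero])
    have hg2 : g.natDegree = 2 := by omega
    have hh2 : h.natDegree = 2 := by omega
    set u := g.leadingCoeff with hu
    have hu0 : u ≠ 0 := Polynomial.leadingCoeff_ne_zero.mpr hg0
    have hlead : u * h.leadingCoeff = 1 := by
      rw [hu, ← Polynomial.leadingCoeff_mul, ← hgh]; exact hm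
    have hg' : (C u⁻¹ * g).Monic := by
      unfold Polynomial.Monic
      rw [Polynomial.leadingCoeff_mul, Polynomial.leadingCoeff_C]
      exact inv_mul_cancel₀ hu0
    have hh' : (C u * h).Monic := by
      unfold Polynomial.Monic
      rw [Polynomial.leadingCoeff_mul, Polynomial.leadingCoeff_C]
      exact hlead
    have hgd' : (C u⁻¹ * g).natDegree = 2 := by
      rw [Polynomial.natDegree_C_mul (inv_ne_zero hu0), hg2]
    have hhd' : (C u * h).natDegree = 2 := by
      rw [Polynomial.natDegree_C_mul hu0, hh2]
    have hfeq : f = (C u⁻¹ * g) * (C u * h) := by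
      rw [hgh]
      have : C u⁻¹ * g * (C u * h) = C (u⁻¹ * u) * (g * h) := by rw [map_mul]; ring
      rw [this, inv_mul_cancel₀ hu0, map_one, one_mul]
    exact h2 _ _ _ _ (by rw [hfeq, monic2_aux hg' hgd', monic2_aux hh' hhd'])

/-- The quartic is irreducible over `ZMod 3`. -/
lemma irred_mod3_aux :
    Irreducible (X ^ 4 - 2 * X ^ 3 - X ^ 2 + 2 * X - 19 : (ZMod 3)[X]) := by
  apply irred4_aux
  · monicity!
  · compute_degree!
  · intro x
    simp only [eval_sub, eval_add, eval_mul, eval_pow, eval_X, eval_ofNat]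
    revert x; decide
  · intro a b c d heq
    have hexp : (X ^ 2 + C a * X + C b) * (X ^ 2 + C c * X + C d)
        = X ^ 4 + C (a + c) * X ^ 3 + C (b + d + a * c) * X ^ 2 + C (a * d + b * c) * X
          + C (b * d) := by
      simp only [map_add, map_mul]; ring
    rw [hexp] at heq
    rw [show (2 : (ZMod 3)[X]) = C 2 from (map_ofNat C 2).symm,
        show (19 : (ZMod 3)[X]) = C 19 from (map_ofNat C 19).symm] at heq
    have e0 := congrArg (fun p => Polynomial.coeff p 0) heq
    have e1 := congrArg (fun p => Polynomial.coeff p 1) heq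
    have e2 := congrArg (fun p => Polynomial.coeff p 2) heq
    have e3 := congrArg (fun p => Polynomial.coeff p 3) heq
    simp only [Polynomial.coeff_sub, Polynomial.coeff_add, Polynomial.coeff_C_mul,
      Polynomial.coeff_X_pow, Polynomial.coeff_C, Polynomial.coeff_X,
      Polynomial.coeff_one] at e0 e1 e2 e3
    norm_num at e0 e1 e2 e3
    clear heq hexp
    revert a b c d
    decide

/-- The quartic is irreducible over `ℤ`. -/
lemma irred_int_aux :
    Irreducible (X ^ 4 - 2 * X ^ 3 - X ^ 2 + 2 * X - 19 : ℤ[X]) := by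
  have hmap : Polynomial.map (Int.castRingHom (ZMod 3))
      (X ^ 4 - 2 * X ^ 3 - X ^ 2 + 2 * X - 19 : ℤ[X])
      = (X ^ 4 - 2 * X ^ 3 - X ^ 2 + 2 * X - 19 : (ZMod 3)[X]) := by
    simp [Polynomial.map_sub, Polynomial.map_add, Polynomial.map_mul, Polynomial.map_pow,
      Polynomial.map_ofNat]
  have hm : (X ^ 4 - 2 * X ^ 3 - X ^ 2 + 2 * X - 19 : ℤ[X]).Monic := by monicity!
  exact hm.irreducible_of_irreducible_map (Int.castRingHom (ZMod 3)) _
    (hmap ▸ irred_mod3_aux)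

/-- The complex number `z = 1/2 - (i/2)√(8√5 - 5)` is a root of
`x⁴ - 2x³ - x² + 2x - 19`, and this polynomial is irreducible over `ℚ`. -/
theorem stmt_9 :
    let z : ℂ := 1/2 - (Complex.I / 2) * (Real.sqrt (8 * Real.sqrt 5 - 5) : ℝ)
    z ^ 4 - 2 * z ^ 3 - z ^ 2 + 2 * z - 19 = 0 ∧
      Irreducible (X ^ 4 - 2 * X ^ 3 - X ^ 2 + 2 * X - 19 : ℚ[X]) := by
  intro z
  constructor
  · have ha : Real.sqrt 5 ^ 2 = 5 := Real.sq_sqrt (by norm_num)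
    have ha' : (2 : ℝ) ≤ Real.sqrt 5 := by nlinarith [Real.sqrt_nonneg 5]
    have hb : Real.sqrt (8 * Real.sqrt 5 - 5) ^ 2 = 8 * Real.sqrt 5 - 5 :=
      Real.sq_sqrt (by nlinarith)
    have keyR : Real.sqrt (8 * Real.sqrt 5 - 5) ^ 4
        + 10 * Real.sqrt (8 * Real.sqrt 5 - 5) ^ 2 - 295 = 0 := by nlinarith
    have key : (Real.sqrt (8 * Real.sqrt 5 - 5) : ℂ) ^ 4
        + 10 * (Real.sqrt (8 * Real.sqrt 5 - 5) : ℂ) ^ 2 - 295 = 0 := by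
      exact_mod_cast congrArg (Complex.ofReal) keyR
    have hI : (Complex.I) ^ 2 = -1 := Complex.I_sq
    show (1/2 - (Complex.I / 2) * (Real.sqrt (8 * Real.sqrt 5 - 5) : ℝ)) ^ 4
        - 2 * (1/2 - (Complex.I / 2) * (Real.sqrt (8 * Real.sqrt 5 - 5) : ℝ)) ^ 3
        - (1/2 - (Complex.I / 2) * (Real.sqrt (8 * Real.sqrt 5 - 5) : ℝ)) ^ 2
        + 2 * (1/2 - (Complex.I / 2) * (Real.sqrt (8 * Real.sqrt 5 - 5) : ℝ)) - 19 = 0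
    linear_combination (1/16 : ℂ) * key
      + (1/16 : ℂ) * ((Complex.I ^ 2 - 1) * (Real.sqrt (8 * Real.sqrt 5 - 5) : ℂ) ^ 4
          - 10 * (Real.sqrt (8 * Real.sqrt 5 - 5) : ℂ) ^ 2) * hI
  · have hmap : Polynomial.map (Int.castRingHom ℚ)
        (X ^ 4 - 2 * X ^ 3 - X ^ 2 + 2 * X - 19 : ℤ[X])
        = (X ^ 4 - 2 * X ^ 3 - X ^ 2 + 2 * X - 19 : ℚ[X]) := by
      simp [Polynomial.map_sub, Polynomial.map_add, Polynomial.map_mul, Polynomial.map_pow,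
        Polynomial.map_ofNat]
    have hm : (X ^ 4 - 2 * X ^ 3 - X ^ 2 + 2 * X - 19 : ℤ[X]).Monic := by monicity!
    exact hmap ▸
      (Polynomial.IsPrimitive.Int.irreducible_iff_irreducible_map_cast hm.isPrimitive).mp
        irred_int_aux
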